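/- arXiv:2409.20317 — 5 statements merged into one kernel-verified Lean document; each statement's English description precedes it below -/
import Mathlib

section
/- Let $k$ be a field containing all $n$-th roots of unity with $\mathrm{char}(k) \nmid n$, and let $a \in k^\times$. Then there is a $k$-algebra isomorphism $k[x]/(x^n - a) \cong k(\sqrt[n]{a})^{l}$, where $l = n / [k(\sqrt[n]{a}) : k]$. -/
open Polynomial IntermediateField

lemma adjoin_c_mul {k K : Type*} [Field k] [Field K] [Algebra k K]
    (c : k) (hc : c ≠ 0) (α : K) :
    IntermediateField.adjoin k {algebraMap k K c * α} = IntermediateField.adjoin k {α} := by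
  have hc' : algebraMap k K c ≠ 0 := by
    simpa using hc
  apply le_antisymm
  · rw [IntermediateField.adjoin_simple_le_iff]
    exact mul_mem (IntermediateField.algebraMap_mem _ c)
      (IntermediateField.mem_adjoin_simple_self k α)
  · rw [IntermediateField.adjoin_simple_le_iff]
    have h : (algebraMap k K c)⁻¹ * (algebraMap k K c * α) ∈
        IntermediateField.adjoin k {algebraMap k K c * α} :=
      mul_mem (inv_mem (IntermediateField.algebraMap_mem _ c))
        (IntermediateField.mem_adjoin_simple_self k _)
    rwa [inv_mul_cancel_left₀ hc'] at h

/-- `k[x]/(x^n - a) ≅ k(ⁿ√a)^l` where `l = n / [k(ⁿ√a) : k]`. -/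
theorem stmt_3 {k K : Type*} [Field k] [Field K] [Algebra k K] [IsAlgClosure k K]
    (n : ℕ) (hn : 0 < n) (hchar : (n : k) ≠ 0)
    (ζ : k) (hζ : IsPrimitiveRoot ζ n)
    (a : k) (ha : a ≠ 0) (α : K) (hα : α ^ n = algebraMap k K a) :
    Nonempty (AdjoinRoot (X ^ n - C a : Polynomial k) ≃ₐ[k]
      (Fin (n / Module.finrank k (IntermediateField.adjoin k ({α} : Set K)))
        → IntermediateField.adjoin k ({α} : Set K))) := by
  haveI : NeZero n := ⟨hn.ne'⟩
  haveI : IsAlgClosed K := IsAlgClosure.isAlgClosed k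
  have hinj : Function.Injective (algebraMap k K) := (algebraMap k K).injective
  have haK : algebraMap k K a ≠ 0 := by simpa using ha
  have hα0 : α ≠ 0 := by
    intro h; rw [h, zero_pow hn.ne'] at hα; exact haK hα.symm
  have hint : IsIntegral k α :=
    ⟨X ^ n - C a, monic_X_pow_sub_C a hn.ne', by simp [hα]⟩
  set L : IntermediateField k K := IntermediateField.adjoin k {α} with hL
  haveI : FiniteDimensional k L := IntermediateField.adjoin.finiteDimensional hint
  set p : Polynomial k := minpoly k α with hp
  set d : ℕ := p.natDegree with hd
  have hd0 : 0 < d := minpoly.natDegree_pos hint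
  have hfr : Module.finrank k L = d := IntermediateField.adjoin.finrank hint
  have hpdvd : p ∣ X ^ n - C a := minpoly.dvd k α (by simp [hα])
  -- roots of p in K
  set q : Polynomial K := p.map (algebraMap k K) with hq
  have hq0 : q ≠ 0 := Polynomial.map_ne_zero (minpoly.ne_zero hint)
  have hqsplits : q.Splits := IsAlgClosed.splits q
  have hqdeg : q.natDegree = d := by
    rw [hq, natDegree_map]
  have hqroots_card : Multiset.card q.roots = d := by
    rw [splits_iff_card_roots.mp hqsplits, hqdeg]
  have hqdvd : q ∣ X ^ n - C (algebraMap k K a) := by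
    have := Polynomial.map_dvd (algebraMap k K) hpdvd
    simpa using this
  have hroots_pow : ∀ r ∈ q.roots, r ^ n = algebraMap k K a := by
    intro r hr
    have hr' : q.IsRoot r := isRoot_of_mem_roots hr
    obtain ⟨t, ht⟩ := hqdvd
    have : (X ^ n - C (algebraMap k K a)).eval r = 0 := by
      rw [ht, eval_mul, hr'.eq_zero, zero_mul]
    simpa [sub_eq_zero] using this
  have hζK : IsPrimitiveRoot (algebraMap k K ζ) n := hζ.map_of_injective hinj
  have hroots_form : ∀ r ∈ q.roots, ∃ c : k, r = algebraMap k K c * α := by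
    intro r hr
    have h1 : (r * α⁻¹) ^ n = 1 := by
      rw [mul_pow, hroots_pow r hr, inv_pow, hα, mul_inv_cancel₀ haK]
    obtain ⟨i, _, hi⟩ := hζK.eq_pow_of_pow_eq_one h1
    refine ⟨ζ ^ i, ?_⟩
    rw [map_pow, hi, inv_mul_cancel_right₀ hα0 r]
  -- product of roots
  have key : ∀ s : Multiset K, (∀ r ∈ s, ∃ c : k, r = algebraMap k K c * α) →
      ∃ c : k, s.prod = algebraMap k K c * α ^ (Multiset.card s) := by
    intro s
    induction s using Multiset.induction with
    | empty => intro _; exact ⟨1, by simp⟩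
    | cons r s ih =>
      intro h
      obtain ⟨c, hc⟩ := h r (Multiset.mem_cons_self r s)
      obtain ⟨c', hc'⟩ := ih (fun x hx => h x (Multiset.mem_cons_of_mem hx))
      refine ⟨c * c', ?_⟩
      rw [Multiset.prod_cons, hc, hc', Multiset.card_cons, map_mul]
      ring
  obtain ⟨c, hc⟩ := key q.roots hroots_form
  have hprod0 : q.roots.prod ≠ 0 := by
    apply Multiset.prod_ne_zero
    intro h0
    have := hroots_pow 0 h0
    rw [zero_pow hn.ne'] at this
    exact haK this.symm
  have hc0 : c ≠ 0 := by
    intro h; rw [h, map_zero, zero_mul] at hc; exact hprod0 hc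
  have hcoeff : algebraMap k K (p.coeff 0) = (-1 : K) ^ d * (algebraMap k K c * α ^ d) := by
    have h1 := Splits.coeff_zero_eq_prod_roots_of_monic hqsplits
      (hq ▸ (minpoly.monic hint).map (algebraMap k K))
    have h2 : q.coeff 0 = algebraMap k K (p.coeff 0) := by rw [hq, coeff_map]
    rw [h2, hqdeg, hc, hqroots_card] at h1
    rw [h1]
  -- b with α ^ d = algebraMap b
  have hcoeff0 : p.coeff 0 ≠ 0 := by
    intro h0
    rw [h0, map_zero] at hcoeff
    have : ((-1 : K) ^ d * (algebraMap k K c * α ^ d)) ≠ 0 := by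
      apply mul_ne_zero (pow_ne_zero _ (by norm_num))
      exact mul_ne_zero (by simpa using hc0) (pow_ne_zero _ hα0)
    exact this hcoeff.symm
  have hb : ∃ b : k, b ≠ 0 ∧ α ^ d = algebraMap k K b := by
    refine ⟨(-1 : k) ^ d * p.coeff 0 * c⁻¹, ?_, ?_⟩
    · exact mul_ne_zero (mul_ne_zero (pow_ne_zero _ (by norm_num)) hcoeff0) (inv_ne_zero hc0)
    · have hcK : algebraMap k K c ≠ 0 := by simpa using hc0
      rw [map_mul, map_mul, map_pow, map_neg, map_one, map_inv₀, hcoeff]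
      field_simp
      have hone : ((-1 : K) ^ d) * ((-1 : K) ^ d) = 1 := by
        rw [← mul_pow]; norm_num
      rw [sq, hone]
  obtain ⟨b, hb0, hαd⟩ := hb
  -- d ∣ n
  have hddvd : d ∣ n := by
    set A := Nat.gcdA d n with hA
    set B := Nat.gcdB d n with hB
    have hbez : (Nat.gcd d n : ℤ) = d * A + n * B := Nat.gcd_eq_gcd_ab d n
    set g0 := Nat.gcd d n with hg0
    have hg0pos : 0 < g0 := Nat.gcd_pos_of_pos_left n hd0
    have hzp : α ^ (g0 : ℤ) = algebraMap k K (b ^ A * a ^ B) := by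
      rw [hbez, zpow_add₀ hα0, zpow_mul, zpow_mul, zpow_natCast, zpow_natCast, hαd, hα,
        map_mul, ← map_zpow₀, ← map_zpow₀]
    have hzp' : α ^ g0 = algebraMap k K (b ^ A * a ^ B) := by
      rw [← zpow_natCast, hzp]
    have hdvd2 : p ∣ X ^ g0 - C (b ^ A * a ^ B) := minpoly.dvd k α (by simp [hzp'])
    have hle : d ≤ g0 := by
      have := Polynomial.natDegree_le_of_dvd hdvd2 (X_pow_sub_C_ne_zero hg0pos _)
      rwa [natDegree_X_pow_sub_C] at this
    have : g0 = d := le_antisymm (Nat.le_of_dvd hd0 (Nat.gcd_dvd_left d n)) hle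
    exact this ▸ Nat.gcd_dvd_right d n
  set m : ℕ := n / d with hm
  have hnm : n = d * m := (Nat.mul_div_cancel' hddvd).symm
  have hm0 : 0 < m := Nat.div_pos (Nat.le_of_dvd hn hddvd) hd0
  set ζd : k := ζ ^ d with hζd_def
  have hζd : IsPrimitiveRoot ζd m := hζ.pow hn hnm
  have hζm : IsPrimitiveRoot (ζ ^ m) d := hζ.pow hn (by rw [hnm, mul_comm])
  have hbm : b ^ m = a := by
    apply hinj
    rw [map_pow, ← hαd, ← pow_mul, ← hnm, hα]
  have hfact : (X ^ n - C a : Polynomial k)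
      = ∏ j ∈ Finset.range m, (X ^ d - C (ζd ^ j * b)) := by
    have h1 : (X ^ m - C a : Polynomial k)
        = ∏ j ∈ Finset.range m, (X - C (ζd ^ j * b)) := X_pow_sub_C_eq_prod hζd hm0 hbm
    have h2 : ((X ^ m - C a : Polynomial k)).comp (X ^ d) = X ^ n - C a := by
      rw [sub_comp, X_pow_comp, C_comp, ← pow_mul, ← hnm]
    rw [← h2, h1, prod_comp]
    refine Finset.prod_congr rfl fun j _ => ?_
    rw [sub_comp, X_comp, C_comp]
  set g : Fin m → Polynomial k := fun j => X ^ d - C (ζd ^ (j : ℕ) * b) with hgdef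
  have hfact' : (X ^ n - C a : Polynomial k) = ∏ j : Fin m, g j := by
    rw [hfact, ← Fin.prod_univ_eq_prod_range (fun j => X ^ d - C (ζd ^ j * b)) m]
  -- generators
  have hζ0 : ζ ≠ 0 := hζ.ne_zero hn.ne'
  have hgenL : ∀ (c0 : k), c0 ≠ 0 →
      k⟮(algebraMap k L c0 * AdjoinSimple.gen k α)⟯ = ⊤ := by
    intro c0 hc0'
    apply IntermediateField.lift_injective L
    rw [IntermediateField.lift_adjoin_simple, IntermediateField.lift_top]
    have hcoe : ((algebraMap k ↥L c0 * AdjoinSimple.gen k α : L) : K)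
        = algebraMap k K c0 * α := rfl
    rw [hcoe, adjoin_c_mul c0 hc0' α]
  have hgen_pow : (AdjoinSimple.gen k α) ^ d = algebraMap k L b := by
    apply Subtype.ext
    push_cast
    exact hαd
  have hβ : ∀ j : Fin m,
      ((algebraMap k L (ζ ^ (j:ℕ)) * AdjoinSimple.gen k α)) ^ Module.finrank k L
      = algebraMap k L (ζd ^ (j:ℕ) * b) := by
    intro j
    rw [hfr]
    have hz : (ζ ^ (j:ℕ)) ^ d = ζd ^ (j:ℕ) := by
      rw [hζd_def, ← pow_mul, ← pow_mul, mul_comm]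
    rw [mul_pow, ← map_pow, hz, hgen_pow]
    exact (map_mul (algebraMap k ↥L) _ _).symm
  have htop : ∀ j : Fin m, k⟮(algebraMap k L (ζ ^ (j:ℕ)) * AdjoinSimple.gen k α)⟯ = ⊤ :=
    fun j => hgenL _ (pow_ne_zero _ hζ0)
  have hβd : ∀ j : Fin m,
      ((algebraMap k L (ζ ^ (j:ℕ)) * AdjoinSimple.gen k α)) ^ d
      = algebraMap k L (ζd ^ (j:ℕ) * b) := by
    intro j; have := hβ j; rwa [hfr] at this
  have hirr : ∀ j : Fin m, Irreducible (g j) := by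
    intro j
    have := irreducible_X_pow_sub_C_of_root_adjoin_eq_top (hβ j) (htop j)
    rwa [hfr] at this
  have hprim : (primitiveRoots (Module.finrank k ↥L) k).Nonempty := by
    rw [hfr]; exact ⟨ζ ^ m, (mem_primitiveRoots hd0).mpr hζm⟩
  have hprimd : (primitiveRoots d k).Nonempty := by
    rw [← hfr]; exact hprim
  have hsplit : ∀ j : Fin m, IsSplittingField k L (X ^ d - C (ζd ^ (j:ℕ) * b)) := by
    intro j
    have := isSplittingField_X_pow_sub_C_of_root_adjoin_eq_top hprim (hβ j) (htop j)
    rwa [hfr] at this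
  -- coprimality
  have hmono : ∀ j : Fin m, (g j).Monic := fun j => monic_X_pow_sub_C _ hd0.ne'
  have hne : ∀ i j : Fin m, i ≠ j → g i ≠ g j := by
    intro i j hij he
    apply hij
    have hC : ζd ^ (i:ℕ) * b = ζd ^ (j:ℕ) * b := by
      have h1 := sub_right_inj.mp he
      exact C_injective h1
    have h2 : ζd ^ (i:ℕ) = ζd ^ (j:ℕ) := mul_right_cancel₀ hb0 hC
    exact Fin.ext (hζd.pow_inj i.2 j.2 h2)
  have hcopel : ∀ i j : Fin m, i ≠ j → IsCoprime (g i) (g j) := by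
    intro i j hij
    rw [(hirr i).coprime_iff_not_dvd]
    intro hdvd
    refine hne i j hij (eq_of_monic_of_associated (hmono i) (hmono j) ?_)
    refine associated_of_dvd_of_natDegree_le hdvd (hmono j).ne_zero ?_
    simp only [hgdef]
    rw [natDegree_X_pow_sub_C, natDegree_X_pow_sub_C]
  have hcop : Pairwise (Function.onFun IsCoprime fun j : Fin m => Ideal.span {g j}) := by
    intro i j hij
    exact (Ideal.isCoprime_span_singleton_iff _ _).mpr (hcopel i j hij)
  have hspan : Ideal.span {(X ^ n - C a : Polynomial k)}
      = ⨅ j : Fin m, Ideal.span {g j} := by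
    rw [Ideal.iInf_span_singleton hcopel, ← hfact']
  have e1 : AdjoinRoot (X ^ n - C a : Polynomial k) ≃ₐ[k]
      (Polynomial k ⧸ ⨅ j : Fin m, Ideal.span {g j}) :=
    Ideal.quotientEquivAlgOfEq k hspan
  have e2 : (Polynomial k ⧸ ⨅ j : Fin m, Ideal.span {g j}) ≃ₐ[k]
      ((j : Fin m) → Polynomial k ⧸ Ideal.span {g j}) :=
    AlgEquiv.ofRingEquiv (f := Ideal.quotientInfRingEquivPiQuotient _ hcop)
      (fun r => rfl)
  have e3 : ∀ j : Fin m, AdjoinRoot (g j) ≃ₐ[k] L := fun j =>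
    haveI := hsplit j
    adjoinRootXPowSubCEquiv hprimd (hirr j) (hβd j)
  refine ⟨?_⟩
  rw [hfr]
  exact e1.trans (e2.trans (AlgEquiv.piCongrRight fun j => e3 j))
end

section
/- Let $k$ be a field containing all $n$-th roots of unity with $\mathrm{char}(k) \nmid n$, and let $a, b \in k^\times$. Then the $k$-algebras $k[x]/(x^n - a)$ and $k[x]/(x^n - b)$ are isomorphic as $k$-algebras if and only if $k(\sqrt[n]{a}) = k(\sqrt[n]{b})$ as subfields of a fixed algebraic closure of $k$. -/
open Polynomial


section Helpers

noncomputable def crtAlg {k : Type*} [Field k] {ι : Type*} [Fintype ι] (I : ι → Ideal k[X])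
    (hI : ∀ i j, i ≠ j → IsCoprime (I i) (I j)) :
    (k[X] ⧸ ⨅ i, I i) ≃ₐ[k] Π i, k[X] ⧸ I i :=
  AlgEquiv.ofRingEquiv (f := Ideal.quotientInfRingEquivPiQuotient I fun i j h => hI i j h)
    (fun _ => rfl)

def piCongrConst {k T : Type*} [CommSemiring k] [Semiring T] [Algebra k T]
    {ι ι' : Type*} (e : ι ≃ ι') : (ι → T) ≃ₐ[k] (ι' → T) where
  toFun f i := f (e.symm i)
  invFun f i := f (e i)
  left_inv f := by ext i; simp
  right_inv f := by ext i; simp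
  map_mul' f g := rfl
  map_add' f g := rfl
  commutes' r := rfl

variable {k K : Type*} [Field k] [Field K] [Algebra k K]

theorem range_adjoinRoot_hom {f : k[X]} (φ : AdjoinRoot f →ₐ[k] K) :
    φ.range = Algebra.adjoin k {φ (AdjoinRoot.root f)} := by
  rw [← Algebra.map_top, ← AdjoinRoot.adjoinRoot_eq_top, AlgHom.map_adjoin, Set.image_singleton]

theorem adjoin_le_of_pow_eq {n : ℕ} (hn : 0 < n) {ζ : k} (hζ : IsPrimitiveRoot ζ n)
    {γ δ : K} (h : γ ^ n = δ ^ n) (hδ : δ ≠ 0) :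
    IntermediateField.adjoin k ({γ} : Set K) ≤ IntermediateField.adjoin k ({δ} : Set K) := by
  have : NeZero n := ⟨hn.ne'⟩
  have hζK : IsPrimitiveRoot (algebraMap k K ζ) n :=
    hζ.map_of_injective (algebraMap k K).injective
  have hpow : (γ / δ) ^ n = 1 := by
    rw [div_pow, h, div_self (pow_ne_zero _ hδ)]
  obtain ⟨j, _, hj⟩ := hζK.eq_pow_of_pow_eq_one hpow
  have hγ : γ = algebraMap k K (ζ ^ j) * δ := by
    rw [map_pow, hj, div_mul_cancel₀ _ hδ]
  rw [IntermediateField.adjoin_simple_le_iff (α := γ), hγ]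
  exact mul_mem (IntermediateField.algebraMap_mem _ _)
    (IntermediateField.mem_adjoin_simple_self k δ)

theorem adjoin_eq_of_pow_eq {n : ℕ} (hn : 0 < n) {ζ : k} (hζ : IsPrimitiveRoot ζ n)
    {γ δ : K} (h : γ ^ n = δ ^ n) (hδ : δ ≠ 0) :
    IntermediateField.adjoin k ({γ} : Set K) = IntermediateField.adjoin k ({δ} : Set K) := by
  have hγ : γ ≠ 0 := fun h0 => hδ (by
    rw [h0, zero_pow hn.ne'] at h
    exact pow_eq_zero_iff hn.ne' |>.mp h.symm)
  exact le_antisymm (adjoin_le_of_pow_eq hn hζ h hδ) (adjoin_le_of_pow_eq hn hζ h.symm hγ)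

variable [IsAlgClosure k K]

theorem subalg_adjoin_eq {γ : K} :
    Algebra.adjoin k ({γ} : Set K) = (IntermediateField.adjoin k ({γ} : Set K)).toSubalgebra := by
  have : IsIntegral k γ := Algebra.IsIntegral.isIntegral γ
  rw [IntermediateField.adjoin_simple_toSubalgebra_of_isAlgebraic this.isAlgebraic]

noncomputable def factorEquiv {g : k[X]} (hirr : Irreducible g) {γ : K}
    (hroot : aeval γ g = 0) :
    AdjoinRoot g ≃ₐ[k] ↥(IntermediateField.adjoin k ({γ} : Set K)) := by
  have : Fact (Irreducible g) := ⟨hirr⟩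
  let φ : AdjoinRoot g →ₐ[k] K := AdjoinRoot.liftAlgHom g (Algebra.ofId k K) γ hroot
  have hinj : Function.Injective φ := φ.toRingHom.injective
  refine (AlgEquiv.ofInjective φ hinj).trans (Subalgebra.equivOfEq _ _ ?_)
  rw [range_adjoinRoot_hom, (AdjoinRoot.liftAlgHom_root g (Algebra.ofId k K) γ hroot : φ _ = γ), subalg_adjoin_eq]

theorem decomp (n : ℕ) (hn : 0 < n) (hchar : (n : k) ≠ 0)
    (ζ : k) (hζ : IsPrimitiveRoot ζ n) (a : k) (ha : a ≠ 0)
    (α : K) (hα : α ^ n = algebraMap k K a) :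
    Nonempty (AdjoinRoot (X ^ n - C a : k[X]) ≃ₐ[k]
      (Fin (n / Module.finrank k ↥(IntermediateField.adjoin k ({α} : Set K))) →
        ↥(IntermediateField.adjoin k ({α} : Set K)))) := by
  classical
  set f : k[X] := X ^ n - C a with hf
  set F := IntermediateField.adjoin k ({α} : Set K) with hF
  have hα0 : α ≠ 0 := by
    intro h0
    rw [h0, zero_pow hn.ne'] at hα
    exact ha ((_root_.map_eq_zero _).mp hα.symm)
  have hint : IsIntegral k α := Algebra.IsIntegral.isIntegral α
  have hFD : FiniteDimensional k F := IntermediateField.adjoin.finiteDimensional hint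
  have hmonic : f.Monic := monic_X_pow_sub_C a hn.ne'
  have hf0 : f ≠ 0 := hmonic.ne_zero
  have hsep : f.Separable := Polynomial.separable_X_pow_sub_C a hchar ha
  have hnodup : (UniqueFactorizationMonoid.normalizedFactors f).Nodup :=
    (UniqueFactorizationMonoid.squarefree_iff_nodup_normalizedFactors hf0).mp hsep.squarefree
  set s : Finset k[X] := ⟨UniqueFactorizationMonoid.normalizedFactors f, hnodup⟩ with hs
  have hmem_irr : ∀ g ∈ s, Irreducible g := fun g hg =>
    UniqueFactorizationMonoid.irreducible_of_normalized_factor g hg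
  have hmem_norm : ∀ g ∈ s, normalize g = g := fun g hg =>
    UniqueFactorizationMonoid.normalize_normalized_factor g hg
  have hmem_dvd : ∀ g ∈ s, g ∣ f := fun g hg =>
    UniqueFactorizationMonoid.dvd_of_mem_normalizedFactors hg
  have hcop : ∀ g ∈ s, ∀ h ∈ s, g ≠ h → IsCoprime g h := by
    intro g hg h hh hne
    rw [(hmem_irr g hg).coprime_iff_not_dvd]
    intro hdvd
    exact hne (((hmem_irr g hg).associated_of_dvd (hmem_irr h hh) hdvd).eq_of_normalized
      (hmem_norm g hg) (hmem_norm h hh))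
  -- roots of each factor
  haveI : IsAlgClosed K := IsAlgClosure.isAlgClosed (R := k)
  have hroot : ∀ g ∈ s, ∃ γ : K, aeval γ g = 0 ∧
      IntermediateField.adjoin k ({γ} : Set K) = F := by
    intro g hg
    obtain ⟨γ, hγ⟩ := IsAlgClosed.exists_aeval_eq_zero K g
      (ne_of_gt (natDegree_pos_iff_degree_pos.mp (hmem_irr g hg).natDegree_pos))
    refine ⟨γ, hγ, ?_⟩
    obtain ⟨q, hq⟩ := hmem_dvd g hg
    have hγf : aeval γ f = 0 := by rw [hq, map_mul, hγ, zero_mul]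
    have hγn : γ ^ n = algebraMap k K a := by
      simpa [hf, sub_eq_zero] using hγf
    exact adjoin_eq_of_pow_eq hn hζ (by rw [hγn, hα]) hα0
  choose γ hγroot hγadj using hroot
  -- span identity
  have hspan : Ideal.span {f} = ⨅ g : ↥s, Ideal.span {(g : k[X])} := by
    rw [Ideal.iInf_span_singleton (I := fun g : ↥s => (g : k[X]))
      (fun i j hij => hcop i i.2 j j.2 (fun h => hij (Subtype.ext h)))]
    rw [Ideal.span_singleton_eq_span_singleton]
    rw [Finset.prod_coe_sort s (fun g => g)]
    have : ∏ g ∈ s, g = (UniqueFactorizationMonoid.normalizedFactors f).prod := by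
      rw [Finset.prod_eq_multiset_prod, hs, Multiset.map_id']
    rw [this]
    exact (UniqueFactorizationMonoid.prod_normalizedFactors hf0).symm
  -- main chain
  let e0 : AdjoinRoot f ≃ₐ[k] (k[X] ⧸ ⨅ g : ↥s, Ideal.span {(g : k[X])}) :=
    Ideal.quotientEquivAlgOfEq k hspan
  let e1 := crtAlg (fun g : ↥s => Ideal.span {(g : k[X])}) (fun i j hij =>
    (Ideal.isCoprime_span_singleton_iff _ _).mpr
      (hcop i i.2 j j.2 (fun h => hij (Subtype.ext h))))
  let e2 : (Π g : ↥s, AdjoinRoot (g : k[X])) ≃ₐ[k] (↥s → F) :=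
    AlgEquiv.piCongrRight (fun g =>
      (factorEquiv (hmem_irr g g.2) (hγroot g g.2)).trans
        (IntermediateField.equivOfEq (hγadj g g.2)))
  let e3 : (↥s → F) ≃ₐ[k] (Fin s.card → F) := piCongrConst s.equivFin
  let E : AdjoinRoot f ≃ₐ[k] (Fin s.card → F) := ((e0.trans e1).trans e2).trans e3
  -- dimension count
  have hd : 0 < Module.finrank k F := Module.finrank_pos
  have hrankA : Module.finrank k (AdjoinRoot f) = n := by
    rw [PowerBasis.finrank (AdjoinRoot.powerBasis' hmonic)]
    show (AdjoinRoot.powerBasis' hmonic).dim = n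
    rw [AdjoinRoot.powerBasis'_dim, hf, natDegree_X_pow_sub_C]
  have hrankPi : Module.finrank k (Fin s.card → F) = s.card * Module.finrank k F := by
    rw [Module.finrank_pi_fintype, Finset.sum_const, Finset.card_univ, Fintype.card_fin,
      smul_eq_mul]
  have hcard : n = s.card * Module.finrank k F := by
    rw [← hrankA, E.toLinearEquiv.finrank_eq, hrankPi]
  have hm : n / Module.finrank k F = s.card := by
    rw [hcard, Nat.mul_div_cancel _ hd]
  rw [hm]
  exact ⟨E⟩

end Helpers

/-- `k[x]/(x^n - a) ≅ k[x]/(x^n - b)` as `k`-algebras iff `k(ⁿ√a) = k(ⁿ√b)` inside a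
fixed algebraic closure. -/
theorem stmt_4 {k K : Type*} [Field k] [Field K] [Algebra k K] [IsAlgClosure k K]
    (n : ℕ) (hn : 0 < n) (hchar : (n : k) ≠ 0)
    (ζ : k) (hζ : IsPrimitiveRoot ζ n)
    (a b : k) (ha : a ≠ 0) (hb : b ≠ 0)
    (α β : K) (hα : α ^ n = algebraMap k K a) (hβ : β ^ n = algebraMap k K b) :
    Nonempty (AdjoinRoot (X ^ n - C a : Polynomial k) ≃ₐ[k]
        AdjoinRoot (X ^ n - C b : Polynomial k))
      ↔ IntermediateField.adjoin k ({α} : Set K)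
          = IntermediateField.adjoin k ({β} : Set K) := by
  constructor
  · rintro ⟨e⟩
    have hα0 : α ≠ 0 := by
      intro h0; rw [h0, zero_pow hn.ne'] at hα
      exact ha ((_root_.map_eq_zero _).mp hα.symm)
    have hβ0 : β ≠ 0 := by
      intro h0; rw [h0, zero_pow hn.ne'] at hβ
      exact hb ((_root_.map_eq_zero _).mp hβ.symm)
    have hβroot : aeval β (X ^ n - C b : k[X]) = 0 := by
      simp [hβ, sub_eq_zero]
    let homB : AdjoinRoot (X ^ n - C b : k[X]) →ₐ[k] K := AdjoinRoot.liftAlgHom _ (Algebra.ofId k K) β hβroot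
    let ψ : AdjoinRoot (X ^ n - C a : k[X]) →ₐ[k] K := homB.comp e.toAlgHom
    set γ := ψ (AdjoinRoot.root _) with hγ
    have hγn : γ ^ n = algebraMap k K a := by
      rw [hγ, ← map_pow, root_X_pow_sub_C_pow, ← AdjoinRoot.algebraMap_eq, AlgHom.commutes]
    have key : Algebra.adjoin k ({γ} : Set K) = Algebra.adjoin k ({β} : Set K) := by
      rw [← range_adjoinRoot_hom ψ]
      have : ψ.range = homB.range := by
        rw [AlgHom.range_comp, (AlgHom.range_eq_top _).mpr e.surjective, Algebra.map_top]
      rw [this, range_adjoinRoot_hom homB, (AdjoinRoot.liftAlgHom_root _ (Algebra.ofId k K) β hβroot : homB _ = β)]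
    rw [subalg_adjoin_eq, subalg_adjoin_eq] at key
    have key2 := IntermediateField.toSubalgebra_injective key
    exact (adjoin_eq_of_pow_eq hn hζ (hγn.trans hα.symm) hα0).symm.trans key2
  · intro h
    obtain ⟨e1⟩ := decomp n hn hchar ζ hζ a ha α hα
    obtain ⟨e2⟩ := decomp n hn hchar ζ hζ b hb β hβ
    rw [← h] at e2
    exact ⟨e1.trans e2.symm⟩
end

section
/- (Kummer theory) Let $k$ be a field containing all $n$-th roots of unity with $\mathrm{char}(k) \nmid n$, and let $a, b \in k^\times$. Then $k(\sqrt[n]{a}) = k(\sqrt[n]{b})$ as subfields of a fixed algebraic closure of $k$ if and only if the classes $[a]$ and $[b]$ generate the same subgroup of $k^\times / (k^\times)^n$. -/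
open Polynomial IntermediateField

private lemma kummer_aux_rel {R : Type*} [CommRing R] [IsDomain R] {n : ℕ} (hn : 0 < n)
    {ζ : R} (hζ : IsPrimitiveRoot ζ n) {x y : R} (h : x ^ n = y ^ n) :
    ∃ i, x = ζ ^ i * y := by
  have hx : x ∈ nthRoots n (y ^ n) := (mem_nthRoots hn).2 h
  rw [hζ.nthRoots_eq rfl] at hx
  simp only [Multiset.mem_map, Multiset.mem_range] at hx
  obtain ⟨i, _, hxe⟩ := hx
  exact ⟨i, hxe.symm⟩

private lemma kummer_mem_adjoin {k K : Type*} [Field k] [Field K] [Algebra k K]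
    (n : ℕ) (hn : 0 < n) (ζ : k) (hζ : IsPrimitiveRoot ζ n)
    (a b : kˣ) (α β : K)
    (hα : α ^ n = algebraMap k K (a : k)) (hβ : β ^ n = algebraMap k K (b : k))
    (hmem : (QuotientGroup.mk a : kˣ ⧸ (powMonoidHom n : kˣ →* kˣ).range) ∈
      Subgroup.zpowers (QuotientGroup.mk b : kˣ ⧸ (powMonoidHom n : kˣ →* kˣ).range)) :
    α ∈ IntermediateField.adjoin k ({β} : Set K) := by
  obtain ⟨m, hm⟩ := hmem
  have hm' : (QuotientGroup.mk (b ^ m) : kˣ ⧸ (powMonoidHom n : kˣ →* kˣ).range)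
      = QuotientGroup.mk a := by
    rw [QuotientGroup.mk_zpow]; exact hm
  rw [QuotientGroup.eq] at hm'
  obtain ⟨c, hc⟩ := hm'
  have hc' : a = b ^ m * c ^ n := by
    have : (b ^ m) * ((b ^ m)⁻¹ * a) = (b ^ m) * c ^ n := by
      rw [← hc]; rfl
    rw [mul_inv_cancel_left] at this
    rw [this]
  have hβ0 : β ≠ 0 := by
    intro h
    rw [h, zero_pow hn.ne'] at hβ
    exact b.ne_zero ((algebraMap k K).injective (by simpa using hβ.symm))
  -- x := β^m * c
  set x : K := β ^ m * algebraMap k K (c : k) with hx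
  have hxn : α ^ n = x ^ n := by
    rw [hx, mul_pow, ← zpow_natCast (β ^ m), ← zpow_mul, mul_comm (m : ℤ), zpow_mul,
      zpow_natCast, hβ, ← map_pow, hα, hc']
    simp only [Units.val_mul, Units.val_zpow_eq_zpow_val, Units.val_pow_eq_pow_val,
      map_mul, map_zpow₀, map_pow]
  have hζK : IsPrimitiveRoot (algebraMap k K ζ) n :=
    hζ.map_of_injective (algebraMap k K).injective
  obtain ⟨i, hi⟩ := kummer_aux_rel hn hζK hxn
  rw [hi, hx]
  have hβmem : β ∈ IntermediateField.adjoin k ({β} : Set K) :=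
    IntermediateField.mem_adjoin_simple_self k β
  refine mul_mem ?_ (mul_mem (zpow_mem hβmem m) ?_)
  · rw [← map_pow]; exact IntermediateField.algebraMap_mem _ _
  · exact IntermediateField.algebraMap_mem _ _


set_option synthInstance.maxHeartbeats 1000000 in
set_option maxHeartbeats 2000000 in
private lemma kummer_hard {k K : Type*} [Field k] [Field K] [Algebra k K] [IsAlgClosure k K]
    (n : ℕ) (hn : 0 < n) (hchar : (n : k) ≠ 0)
    (ζ : k) (hζ : IsPrimitiveRoot ζ n)
    (a b : kˣ) (α β : K)
    (hα : α ^ n = algebraMap k K (a : k)) (hβ : β ^ n = algebraMap k K (b : k))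
    (hle : IntermediateField.adjoin k ({α} : Set K) ≤ IntermediateField.adjoin k ({β} : Set K)) :
    (QuotientGroup.mk a : kˣ ⧸ (powMonoidHom n : kˣ →* kˣ).range) ∈
      Subgroup.zpowers (QuotientGroup.mk b : kˣ ⧸ (powMonoidHom n : kˣ →* kˣ).range) := by
  haveI : Algebra.IsAlgebraic k K := IsAlgClosure.isAlgebraic
  have hint : IsIntegral k β := Algebra.IsIntegral.isIntegral β
  set L : IntermediateField k K := IntermediateField.adjoin k ({β} : Set K) with hL
  haveI : FiniteDimensional k L := IntermediateField.adjoin.finiteDimensional hint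
  set β' : L := IntermediateField.AdjoinSimple.gen k β with hβ'def
  have hαmem : α ∈ L := hle (IntermediateField.mem_adjoin_simple_self k α)
  set α' : L := ⟨α, hαmem⟩ with hα'def
  -- coercions
  have coe_alg : ∀ x : k, ((algebraMap k L x : L) : K) = algebraMap k K x := fun x => by
    rw [IsScalarTower.algebraMap_apply k L K]; rfl
  have hinjL : Function.Injective (algebraMap k L) := (algebraMap k L).injective
  have hβ'pow : β' ^ n = algebraMap k L (b : k) := by
    apply Subtype.ext
    push_cast
    exact hβ
  have hα'pow : α' ^ n = algebraMap k L (a : k) := by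
    apply Subtype.ext
    push_cast
    exact hα
  have hb0 : algebraMap k L (b : k) ≠ 0 := by
    simpa using b.ne_zero
  have ha0 : algebraMap k L (a : k) ≠ 0 := by
    simpa using a.ne_zero
  have hβ'0 : β' ≠ 0 := fun h => hb0 (by rw [← hβ'pow, h, zero_pow hn.ne'])
  have hα'0 : α' ≠ 0 := fun h => ha0 (by rw [← hα'pow, h, zero_pow hn.ne'])
  have hζL : IsPrimitiveRoot (algebraMap k L ζ) n := hζ.map_of_injective hinjL
  -- adjoin of β' is everything
  have htop : IntermediateField.adjoin k ({β'} : Set L) = ⊤ := by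
    apply IntermediateField.lift_injective L
    rw [IntermediateField.lift_adjoin_simple, IntermediateField.lift_top]
    exact hL.symm
  have halgtop : Algebra.adjoin k ({β'} : Set L) = (⊤ : Subalgebra k L) := by
    rw [← IntermediateField.adjoin_simple_toSubalgebra_of_isAlgebraic (IsIntegral.of_finite k β').isAlgebraic,
      htop, IntermediateField.top_toSubalgebra]
  -- splitting field / Galois
  haveI hsf : IsSplittingField k L (X ^ n - C ((b : k))) := by
    constructor
    · rw [Polynomial.map_sub, Polynomial.map_pow, Polynomial.map_C,
        Polynomial.map_X]
      exact X_pow_sub_C_splits_of_isPrimitiveRoot hζL hβ'pow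
    · rw [eq_top_iff, ← halgtop]
      apply Algebra.adjoin_mono
      rw [Set.singleton_subset_iff, mem_rootSet_of_ne (X_pow_sub_C_ne_zero hn _)]
      rw [aeval_def, eval₂_sub, eval₂_X_pow, eval₂_C, hβ'pow, sub_self]
  haveI hgal : IsGalois k L :=
    IsGalois.of_separable_splitting_field (p := X ^ n - C ((b : k)))
      (Polynomial.separable_X_pow_sub_C _ hchar b.ne_zero)
  -- every automorphism multiplies an n-th root by an n-th root of unity from k
  have key : ∀ (σ : L ≃ₐ[k] L) (γ : L) (u : k), γ ^ n = algebraMap k L u →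
      ∃ t : k, t ^ n = 1 ∧ σ γ = algebraMap k L t * γ := by
    intro σ γ u hu
    have h1 : (σ γ) ^ n = γ ^ n := by
      rw [← map_pow, hu, AlgEquiv.commutes]
    obtain ⟨i, hi⟩ := kummer_aux_rel hn hζL h1
    exact ⟨ζ ^ i, by rw [← pow_mul, mul_comm, pow_mul, hζ.pow_eq_one, one_pow],
      by rw [hi, map_pow]⟩
  -- fixing the generator implies identity
  have hfixgen : ∀ σ : L ≃ₐ[k] L, σ β' = β' → σ = 1 := by
    intro σ h
    refine AlgEquiv.ext fun x => ?_
    have hx : x ∈ Algebra.adjoin k ({β'} : Set L) := by rw [halgtop]; trivial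
    induction hx using Algebra.adjoin_induction with
    | mem y hy => rw [Set.mem_singleton_iff] at hy; subst hy; simpa using h
    | algebraMap r => simpa using σ.commutes r
    | add u v _ _ ihu ihv =>
        simp only [AlgEquiv.one_apply] at ihu ihv ⊢
        rw [map_add, ihu, ihv]
    | mul u v _ _ ihu ihv =>
        simp only [AlgEquiv.one_apply] at ihu ihv ⊢
        rw [map_mul, ihu, ihv]
  -- the character σ ↦ σ β' / β' is an injective hom into L
  let χ : (L ≃ₐ[k] L) →* L := {
    toFun := fun σ => σ β' / β'
    map_one' := by simp [div_self hβ'0]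
    map_mul' := fun σ τ => by
      obtain ⟨t, ht1, ht2⟩ := key τ β' (b : k) hβ'pow
      show σ (τ β') / β' = (σ β' / β') * (τ β' / β')
      rw [ht2, map_mul, AlgEquiv.commutes]
      field_simp }
  have hχinj : Function.Injective χ := by
    rw [injective_iff_map_eq_one]
    intro σ hσ
    apply hfixgen
    have h1 : σ β' / β' = 1 := hσ
    field_simp at h1
    exact h1
  haveI hcyc : IsCyclic (L ≃ₐ[k] L) := isCyclic_of_subgroup_isDomain χ hχinj
  obtain ⟨σ, hσgen⟩ := hcyc.exists_generator
  obtain ⟨e, he1, he2⟩ := key σ β' (b : k) hβ'pow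
  obtain ⟨t, ht1, ht2⟩ := key σ α' (a : k) hα'pow
  have he0 : e ≠ 0 := by
    intro h; rw [h, zero_pow hn.ne'] at he1; exact zero_ne_one he1
  -- iterating the generator
  have pow_claim : ∀ (γ : L) (u : k), σ γ = algebraMap k L u * γ →
      ∀ j : ℕ, (σ ^ j) γ = algebraMap k L (u ^ j) * γ := by
    intro γ u h j
    induction j with
    | zero => simp
    | succ j ih =>
      rw [pow_succ, AlgEquiv.mul_apply, h, map_mul, AlgEquiv.commutes, ih, pow_succ, map_mul]
      ring
  set m := orderOf σ with hm
  have hm0 : 0 < m := orderOf_pos σ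
  have hem : e ^ m = 1 := by
    have h1 := pow_claim β' e he2 m
    rw [pow_orderOf_eq_one, AlgEquiv.one_apply] at h1
    have h2 : algebraMap k L (e ^ m) * β' = 1 * β' := by rw [one_mul, ← h1]
    have h3 := mul_right_cancel₀ hβ'0 h2
    exact hinjL (by simpa using h3)
  have htm : t ^ m = 1 := by
    have h1 := pow_claim α' t ht2 m
    rw [pow_orderOf_eq_one, AlgEquiv.one_apply] at h1
    have h2 : algebraMap k L (t ^ m) * α' = 1 * α' := by rw [one_mul, ← h1]
    have h3 := mul_right_cancel₀ hα'0 h2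
    exact hinjL (by simpa using h3)
  -- the order of e is exactly m
  have horder : orderOf e = m := by
    have hdvd1 : orderOf e ∣ m := orderOf_dvd_of_pow_eq_one hem
    have hpos : 0 < orderOf e := by
      rcases Nat.eq_zero_or_pos (orderOf e) with h | h
      · rw [h] at hdvd1; exact absurd (Nat.eq_zero_of_zero_dvd hdvd1) hm0.ne'
      · exact h
    have hdvd2 : m ∣ orderOf e := by
      apply orderOf_dvd_of_pow_eq_one
      apply hfixgen
      have h1 := pow_claim β' e he2 (orderOf e)
      rwa [pow_orderOf_eq_one e, map_one, one_mul] at h1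
    exact Nat.dvd_antisymm hdvd1 hdvd2
  have heprim : IsPrimitiveRoot e m := horder ▸ IsPrimitiveRoot.orderOf e
  haveI : NeZero m := ⟨hm0.ne'⟩
  obtain ⟨r, hrm, hr⟩ := heprim.eq_pow_of_pow_eq_one htm
  -- the element α' / β'^r is fixed by the Galois group
  set x : L := α' / β' ^ r with hx
  have hσx : σ x = x := by
    have h1 : algebraMap k L (e ^ r) ≠ 0 := by
      simp only [ne_eq, _root_.map_eq_zero]
      exact pow_ne_zero _ he0
    rw [hx, map_div₀, map_pow, ht2, he2, ← hr, mul_pow, ← map_pow,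
      mul_div_mul_left _ _ h1]
  have hfix : ∀ τ : (L ≃ₐ[k] L), τ x = x := by
    intro τ
    have h1 : σ ∈ MulAction.stabilizer (L ≃ₐ[k] L) x := by
      show σ • x = x
      rwa [AlgEquiv.smul_def]
    have h2 : τ ∈ MulAction.stabilizer (L ≃ₐ[k] L) x := (Subgroup.zpowers_le.mpr h1) (hσgen τ)
    rw [← AlgEquiv.smul_def τ x]
    exact h2
  have hxbot : x ∈ (⊥ : IntermediateField k L) := by
    have hbot := ((IsGalois.tfae (F := k) (E := L)).out 0 1).mp hgal
    rw [← hbot]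
    exact fun g => hfix g
  rw [IntermediateField.mem_bot] at hxbot
  obtain ⟨c, hc⟩ := hxbot
  have hβr0 : β' ^ r ≠ 0 := pow_ne_zero _ hβ'0
  have hrel : α' = algebraMap k L c * β' ^ r := by
    rw [hx, eq_div_iff hβr0] at hc
    exact hc.symm
  have hc0 : c ≠ 0 := by
    intro h
    apply hα'0
    rw [hrel, h, map_zero, zero_mul]
  -- the n-th power relation in k
  have hkey : (a : k) = c ^ n * (b : k) ^ r := by
    apply hinjL
    rw [← hα'pow, hrel, mul_pow, map_mul, map_pow, map_pow]
    congr 1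
    rw [← pow_mul, mul_comm r n, pow_mul, hβ'pow]
  -- conclude
  refine ⟨(r : ℤ), ?_⟩
  have hfin : (QuotientGroup.mk (b ^ (r : ℤ)) : kˣ ⧸ (powMonoidHom n : kˣ →* kˣ).range)
      = QuotientGroup.mk a := by
    rw [QuotientGroup.eq]
    refine ⟨Units.mk0 c hc0, ?_⟩
    apply Units.ext
    show (Units.mk0 c hc0 : k) ^ n = (((b ^ (r : ℤ))⁻¹ * a : kˣ) : k)
    rw [Units.val_mul, zpow_natCast]
    simp only [Units.val_mk0, Units.val_inv_eq_inv_val, Units.val_pow_eq_pow_val]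
    rw [hkey]
    field_simp
  rw [← hfin, QuotientGroup.mk_zpow]

/-- Kummer theory: `k(ⁿ√a) = k(ⁿ√b)` iff `[a]` and `[b]` generate the same subgroup
of `k^× / (k^×)^n`. -/
theorem stmt_5 {k K : Type*} [Field k] [Field K] [Algebra k K] [IsAlgClosure k K]
    (n : ℕ) (hn : 0 < n) (hchar : (n : k) ≠ 0)
    (ζ : k) (hζ : IsPrimitiveRoot ζ n)
    (a b : kˣ) (α β : K)
    (hα : α ^ n = algebraMap k K (a : k)) (hβ : β ^ n = algebraMap k K (b : k)) :
    IntermediateField.adjoin k ({α} : Set K) = IntermediateField.adjoin k ({β} : Set K)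
      ↔ Subgroup.zpowers
            ((QuotientGroup.mk a : kˣ ⧸ (powMonoidHom n : kˣ →* kˣ).range))
          = Subgroup.zpowers
            ((QuotientGroup.mk b : kˣ ⧸ (powMonoidHom n : kˣ →* kˣ).range)) := by
  constructor
  · intro h
    apply le_antisymm
    · rw [Subgroup.zpowers_le]
      exact kummer_hard n hn hchar ζ hζ a b α β hα hβ (le_of_eq h)
    · rw [Subgroup.zpowers_le]
      exact kummer_hard n hn hchar ζ hζ b a β α hβ hα (le_of_eq h.symm)
  · intro h
    apply le_antisymm
    · exact IntermediateField.adjoin_le_iff.mpr (Set.singleton_subset_iff.mpr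
        (kummer_mem_adjoin n hn ζ hζ a b α β hα hβ (h ▸ Subgroup.mem_zpowers _)))
    · exact IntermediateField.adjoin_le_iff.mpr (Set.singleton_subset_iff.mpr
        (kummer_mem_adjoin n hn ζ hζ b a β α hβ hα (h ▸ Subgroup.mem_zpowers _)))
end

section
/- Let $k$ be a field containing all $n$-th roots of unity with $\mathrm{char}(k) \nmid n$, and let $a \in k^\times$. Then the order of the class $[a]$ in the group $k^\times/(k^\times)^n$ equals the degree $[k(\sqrt[n]{a}) : k]$. -/
/-- Kummer theory: the order of `[a]` in `k^×/(k^×)^n` equals `[k(ⁿ√a) : k]`. -/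
theorem stmt_14 {k K : Type*} [Field k] [Field K] [Algebra k K] [IsAlgClosure k K]
    (n : ℕ) (hn : 0 < n) (hchar : (n : k) ≠ 0)
    (ζ : k) (hζ : IsPrimitiveRoot ζ n)
    (a : kˣ) (α : K) (hα : α ^ n = algebraMap k K (a : k)) :
    orderOf ((QuotientGroup.mk a : kˣ ⧸ (powMonoidHom n : kˣ →* kˣ).range))
      = Module.finrank k (IntermediateField.adjoin k ({α} : Set K)) := by
  haveI : NeZero n := ⟨hn.ne'⟩
  set N := (powMonoidHom n : kˣ →* kˣ).range with hN
  set A := IntermediateField.adjoin k ({α} : Set K) with hA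
  have hinj : Function.Injective (algebraMap k K) := (algebraMap k K).injective
  have ha0 : (a : k) ≠ 0 := a.ne_zero
  have hα0 : α ≠ 0 := by
    intro h
    rw [h, zero_pow hn.ne'] at hα
    exact ha0 (hinj (by simpa using hα.symm))
  have hint : IsIntegral k α :=
    IsIntegral.of_pow hn (hα ▸ isIntegral_algebraMap)
  haveI : FiniteDimensional k A := IntermediateField.adjoin.finiteDimensional hint
  set d := Module.finrank k A with hd
  have hmemα : α ∈ A := IntermediateField.mem_adjoin_simple_self k α
  set x : A := ⟨α, hmemα⟩ with hx
  have hxn : x ^ n = algebraMap k A (a : k) := by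
    apply Subtype.ext
    push_cast
    simpa using hα
  -- norm argument: m ∣ d
  have hnorm : (Algebra.norm k x) ^ n = (a : k) ^ d := by
    rw [← map_pow, hxn, Algebra.norm_algebraMap]
  have hx0 : x ≠ 0 := fun h => hα0 (by simpa [hx] using congrArg Subtype.val h)
  have hN0 : Algebra.norm k x ≠ 0 := Algebra.norm_ne_zero_iff.mpr hx0
  have hdvd1 : orderOf ((QuotientGroup.mk a : kˣ ⧸ N)) ∣ d := by
    apply orderOf_dvd_of_pow_eq_one
    rw [← QuotientGroup.mk'_apply, ← map_pow, QuotientGroup.mk'_apply,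
      QuotientGroup.eq_one_iff]
    refine ⟨Units.mk0 (Algebra.norm k x) hN0, Units.ext ?_⟩
    simpa [powMonoidHom] using hnorm
  -- m is positive
  have hpown : ((QuotientGroup.mk a : kˣ ⧸ N)) ^ n = 1 := by
    rw [← QuotientGroup.mk'_apply, ← map_pow, QuotientGroup.mk'_apply,
      QuotientGroup.eq_one_iff]
    exact ⟨a, rfl⟩
  have hmpos : 0 < orderOf ((QuotientGroup.mk a : kˣ ⧸ N)) := by
    rw [orderOf_pos_iff]
    exact isOfFinOrder_iff_pow_eq_one.mpr ⟨n, hn, hpown⟩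
  set m := orderOf ((QuotientGroup.mk a : kˣ ⧸ N)) with hm
  -- a ^ m is an n-th power
  have ham : a ^ m ∈ N := by
    rw [← QuotientGroup.eq_one_iff, ← QuotientGroup.mk'_apply, map_pow,
      QuotientGroup.mk'_apply]
    exact pow_orderOf_eq_one _
  obtain ⟨b, hb⟩ := ham
  have hb' : (b : k) ^ n = (a : k) ^ m := by
    have := congrArg Units.val hb
    simpa [powMonoidHom] using this
  -- α ^ m times an n-th root of unity lies in k
  have hroot : (α ^ m / algebraMap k K (b : k)) ^ n = 1 := by
    have hbne : algebraMap k K (b : k) ≠ 0 := by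
      simpa using fun h => b.ne_zero (hinj (by simpa using h))
    rw [div_pow, div_eq_one_iff_eq (pow_ne_zero _ hbne)]
    rw [← pow_mul, mul_comm m n, pow_mul, hα, ← map_pow, ← map_pow, hb']
  have hζ' : IsPrimitiveRoot (algebraMap k K ζ) n := hζ.map_of_injective hinj
  obtain ⟨i, hi, hiz⟩ := hζ'.eq_pow_of_pow_eq_one hroot
  have hbne : algebraMap k K (b : k) ≠ 0 := by
    simpa using fun h => b.ne_zero (hinj (by simpa using h))
  have hαm : α ^ m = algebraMap k K (ζ ^ i * (b : k)) := by
    rw [map_mul, map_pow, hiz]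
    field_simp
  -- hence the minimal polynomial has degree at most m
  have hdeg : d = (minpoly k α).natDegree := IntermediateField.adjoin.finrank hint
  have hdvd : minpoly k α ∣ Polynomial.X ^ m - Polynomial.C (ζ ^ i * (b : k)) := by
    apply minpoly.dvd
    simp [hαm]
  have hle : d ≤ m := by
    rw [hdeg]
    calc (minpoly k α).natDegree
        ≤ (Polynomial.X ^ m - Polynomial.C (ζ ^ i * (b : k))).natDegree :=
          Polynomial.natDegree_le_of_dvd hdvd
            (Polynomial.monic_X_pow_sub_C _ hmpos.ne').ne_zero
      _ = m := Polynomial.natDegree_X_pow_sub_C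
  have hdpos : 0 < d := Module.finrank_pos
  exact le_antisymm (Nat.le_of_dvd hdpos hdvd1) hle
end

section
/- Let $k$ be a field containing a primitive $n$-th root of unity $\zeta$, with $\mathrm{char}(k) \nmid n$, and let $a, b \in k^\times$. Let $B_a$ and $B_b$ denote the $n \times n$ companion-type matrices of $x^n - a$ and $x^n - b$. If the classes $[a]$ and $[b]$ generate the same subgroup of $k^\times/(k^\times)^n$, then the centralizer algebras $\{M \in M_n(k) : M B_a = B_a M\}$ and $\{M \in M_n(k) : M B_b = B_b M\}$ are isomorphic as $k$-algebras. -/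
open Matrix Polynomial

namespace Stmt17Aux

variable {k : Type*} [Field k] {n : ℕ}

/-- The companion-type matrix of `xⁿ - a`. -/
def cm (n : ℕ) (a : k) : Matrix (Fin n) (Fin n) k := fun i j =>
  if (i : ℕ) = 0 ∧ (j : ℕ) = n - 1 then a
  else if (i : ℕ) = (j : ℕ) + 1 then 1 else 0

lemma ext_of_mulVec_single {M N : Matrix (Fin n) (Fin n) k}
    (h : ∀ j, M *ᵥ Pi.single j (1 : k) = N *ᵥ Pi.single j 1) : M = N := by
  ext i j
  have := congrFun (h j) i
  simpa [mulVec_single_one] using this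

lemma sum_mulVec {ι : Type*} (s : Finset ι) (f : ι → Matrix (Fin n) (Fin n) k)
    (v : Fin n → k) : (∑ i ∈ s, f i) *ᵥ v = ∑ i ∈ s, f i *ᵥ v := by
  induction s using Finset.cons_induction with
  | empty => simp [Matrix.zero_mulVec]
  | cons i s hi ih => simp [Finset.sum_cons, Matrix.add_mulVec, ih]

lemma cm_mulVec_single (hn : 0 < n) (a : k) (j : Fin n) :
    cm n a *ᵥ Pi.single j 1 =
      if h : (j : ℕ) + 1 < n then Pi.single (⟨(j : ℕ) + 1, h⟩ : Fin n) 1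
      else a • (Pi.single (⟨0, hn⟩ : Fin n) (1 : k) : Fin n → k) := by
  funext i
  rw [mulVec_single_one]
  by_cases h : (j : ℕ) + 1 < n
  · have hj : ¬ ((j : ℕ) = n - 1) := by omega
    rw [dif_pos h]
    show cm n a i j = (Pi.single (⟨(j : ℕ) + 1, h⟩ : Fin n) (1 : k) : Fin n → k) i
    simp only [cm, hj, and_false, if_false, Pi.single_apply, Fin.ext_iff]
  · have hj : (j : ℕ) = n - 1 := by omega
    rw [dif_neg h]
    show cm n a i j = (a • (Pi.single (⟨0, hn⟩ : Fin n) (1 : k) : Fin n → k)) i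
    simp only [cm, hj, and_true, Pi.smul_apply, Pi.single_apply, smul_eq_mul]
    by_cases hi : (i : ℕ) = 0
    · rw [if_pos hi, if_pos (Fin.ext hi), mul_one]
    · have hi2 : ¬ ((i : ℕ) = n - 1 + 1) := by have := i.isLt; omega
      rw [if_neg hi, if_neg hi2, if_neg (fun hc => hi (by rw [hc])), mul_zero]

lemma cm_pow_mulVec (hn : 0 < n) (a : k) (i : ℕ) (h : i < n) :
    (cm n a) ^ i *ᵥ Pi.single (⟨0, hn⟩ : Fin n) (1 : k) = Pi.single (⟨i, h⟩ : Fin n) 1 := by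
  induction i with
  | zero => rw [pow_zero, one_mulVec]
  | succ m ih =>
      have hm : m < n := Nat.lt_of_succ_lt h
      rw [pow_succ', ← Matrix.mulVec_mulVec, ih hm, cm_mulVec_single hn a,
        dif_pos (show ((⟨m, hm⟩ : Fin n) : ℕ) + 1 < n from h)]

lemma cm_pow_n_mulVec (hn : 0 < n) (a : k) :
    (cm n a) ^ n *ᵥ Pi.single (⟨0, hn⟩ : Fin n) (1 : k) =
      a • (Pi.single (⟨0, hn⟩ : Fin n) (1 : k) : Fin n → k) := by
  have h1 : n - 1 < n := by omega
  have hpow : (cm n a) ^ n = cm n a * (cm n a) ^ (n - 1) := by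
    rw [← pow_succ', Nat.sub_add_cancel hn]
  rw [hpow, ← Matrix.mulVec_mulVec, cm_pow_mulVec hn a (n-1) h1,
    cm_mulVec_single hn a, dif_neg (show ¬ (((⟨n-1, h1⟩ : Fin n) : ℕ) + 1 < n) by simp; omega)]

lemma cm_pow_n (hn : 0 < n) (a : k) : (cm n a) ^ n = a • (1 : Matrix (Fin n) (Fin n) k) := by
  apply ext_of_mulVec_single
  intro j
  have hj : Pi.single j (1 : k) = (cm n a) ^ (j : ℕ) *ᵥ Pi.single (⟨0, hn⟩ : Fin n) 1 := by
    rw [cm_pow_mulVec hn a j j.isLt]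
  rw [hj, Matrix.mulVec_mulVec, pow_mul_comm, ← Matrix.mulVec_mulVec, cm_pow_n_mulVec hn a,
    Matrix.mulVec_smul, smul_mulVec, one_mulVec]


lemma aeval_comm (a : k) (g h : Polynomial k) :
    aeval (cm n a) g * aeval (cm n a) h = aeval (cm n a) h * aeval (cm n a) g := by
  rw [← _root_.map_mul, ← _root_.map_mul, mul_comm]

lemma cm_comm_aeval (a : k) (g : Polynomial k) :
    cm n a * aeval (cm n a) g = aeval (cm n a) g * cm n a := by
  have := aeval_comm (n := n) a X g
  rwa [aeval_X] at this

lemma aeval_sum_mulVec (hn : 0 < n) (a : k) (v : Fin n → k) :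
    aeval (cm n a) (∑ i : Fin n, C (v i) * X ^ (i : ℕ)) *ᵥ
        Pi.single (⟨0, hn⟩ : Fin n) (1 : k) = v := by
  rw [map_sum]
  rw [sum_mulVec]
  have : ∀ i : Fin n,
      aeval (cm n a) (C (v i) * X ^ (i : ℕ)) *ᵥ Pi.single (⟨0, hn⟩ : Fin n) (1 : k)
        = Pi.single i (v i) := by
    intro i
    rw [_root_.map_mul, aeval_C, aeval_X_pow, Algebra.algebraMap_eq_smul_one, smul_mul_assoc, one_mul,
      smul_mulVec, cm_pow_mulVec hn a i i.isLt, Fin.eta]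
    funext j
    rw [Pi.smul_apply, Pi.single_apply, Pi.single_apply, smul_eq_mul, mul_ite, mul_one, mul_zero]
  rw [Finset.sum_congr rfl (fun i _ => this i), Finset.univ_sum_single]

lemma centralizer_eq (hn : 0 < n) (a : k) :
    Subalgebra.centralizer k ({cm n a} : Set (Matrix (Fin n) (Fin n) k)) =
      (Polynomial.aeval (cm n a)).range := by
  ext M
  rw [Subalgebra.mem_centralizer_iff]
  constructor
  · intro hM
    have hcomm : Commute (cm n a) M := hM _ rfl
    rw [AlgHom.mem_range]
    refine ⟨∑ i : Fin n, C ((M *ᵥ Pi.single (⟨0, hn⟩ : Fin n) (1 : k)) i) * X ^ (i : ℕ), ?_⟩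
    set g := ∑ i : Fin n, C ((M *ᵥ Pi.single (⟨0, hn⟩ : Fin n) (1 : k)) i) * X ^ (i : ℕ) with hg
    have he0 : aeval (cm n a) g *ᵥ Pi.single (⟨0, hn⟩ : Fin n) (1 : k)
        = M *ᵥ Pi.single (⟨0, hn⟩ : Fin n) (1 : k) := aeval_sum_mulVec hn a _
    apply ext_of_mulVec_single
    intro j
    have hj : Pi.single j (1 : k) = (cm n a) ^ (j : ℕ) *ᵥ Pi.single (⟨0, hn⟩ : Fin n) 1 := by
      rw [cm_pow_mulVec hn a j j.isLt]
    have hc1 : Commute ((cm n a) ^ (j : ℕ)) (aeval (cm n a) g) := by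
      apply Commute.pow_left
      exact cm_comm_aeval a g
    have hc2 : Commute ((cm n a) ^ (j : ℕ)) M := hcomm.pow_left _
    rw [hj, Matrix.mulVec_mulVec, Matrix.mulVec_mulVec, ← hc1.eq, ← hc2.eq,
      ← Matrix.mulVec_mulVec, ← Matrix.mulVec_mulVec, he0]
  · rintro ⟨g, rfl⟩ y hy
    rw [Set.mem_singleton_iff] at hy
    subst hy
    exact cm_comm_aeval a g


lemma aeval_cm_eq_zero (hn : 0 < n) (a : k) :
    aeval (cm n a) (X ^ n - C a) = 0 := by
  rw [map_sub, aeval_X_pow, aeval_C, cm_pow_n hn a, Algebra.algebraMap_eq_smul_one, sub_self]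

lemma indep (hn : 0 < n) (a : k) (g : Polynomial k) (hdeg : g.natDegree < n)
    (h : aeval (cm n a) g = 0) : g = 0 := by
  have key : aeval (cm n a) g *ᵥ Pi.single (⟨0, hn⟩ : Fin n) (1 : k)
      = fun j : Fin n => g.coeff (j : ℕ) := by
    have hrepr : g = ∑ i : Fin n, C (g.coeff (i : ℕ)) * X ^ (i : ℕ) := by
      conv_lhs => rw [Polynomial.as_sum_range' g n hdeg]
      rw [Fin.sum_univ_eq_sum_range (fun i => C (g.coeff i) * X ^ i) n]
      simp only [Polynomial.C_mul_X_pow_eq_monomial]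
    conv_lhs => rw [hrepr]
    exact aeval_sum_mulVec hn a _
  rw [h, Matrix.zero_mulVec] at key
  ext i
  by_cases hi : i < n
  · have := congrFun key.symm ⟨i, hi⟩
    simpa using this
  · exact Polynomial.coeff_eq_zero_of_natDegree_lt (by omega)

noncomputable def phi (hn : 0 < n) (a : k) :
    AdjoinRoot (X ^ n - C a) →ₐ[k] Matrix (Fin n) (Fin n) k :=
  Ideal.Quotient.liftₐ (Ideal.span {X ^ n - C a}) (Polynomial.aeval (cm n a))
    (by
      intro g hg
      rw [Ideal.mem_span_singleton] at hg
      obtain ⟨c, rfl⟩ := hg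
      rw [_root_.map_mul, aeval_cm_eq_zero hn a, zero_mul])

lemma phi_mk (hn : 0 < n) (a : k) (g : Polynomial k) :
    phi hn a (AdjoinRoot.mk _ g) = aeval (cm n a) g := by
  rfl

lemma phi_inj (hn : 0 < n) (a : k) : Function.Injective (phi hn a) := by
  have hmonic : (X ^ n - C a).Monic := monic_X_pow_sub_C a hn.ne'
  rw [injective_iff_map_eq_zero]
  intro z hz
  obtain ⟨g, rfl⟩ := AdjoinRoot.mk_surjective z
  set g' := g %ₘ (X ^ n - C a) with hg'
  have hmkeq : AdjoinRoot.mk (X ^ n - C a) g = AdjoinRoot.mk (X ^ n - C a) g' := by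
    rw [AdjoinRoot.mk_eq_mk]
    refine ⟨g /ₘ (X ^ n - C a), ?_⟩
    have := Polynomial.modByMonic_add_div g (X ^ n - C a)
    rw [← hg'] at this
    linear_combination (norm := ring_nf) -this
  rw [hmkeq] at hz ⊢
  have hz' : aeval (cm n a) g' = 0 := by
    rwa [phi_mk hn a] at hz
  have hdeg : g'.natDegree < n := by
    by_cases h0 : g' = 0
    · rw [h0]; simpa using hn
    · have hd := Polynomial.degree_modByMonic_lt g hmonic
      rw [← hg'] at hd
      have hdn : (X ^ n - C a).degree = (n : WithBot ℕ) := Polynomial.degree_X_pow_sub_C hn a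
      rw [hdn] at hd
      exact (Polynomial.natDegree_lt_iff_degree_lt h0).mpr hd
  rw [indep hn a g' hdeg hz', map_zero]

lemma phi_range (hn : 0 < n) (a : k) :
    (phi hn a).range = (Polynomial.aeval (cm n a)).range := by
  ext M
  rw [AlgHom.mem_range, AlgHom.mem_range]
  constructor
  · rintro ⟨z, rfl⟩
    obtain ⟨g, rfl⟩ := AdjoinRoot.mk_surjective z
    exact ⟨g, (phi_mk hn a g).symm⟩
  · rintro ⟨g, rfl⟩
    exact ⟨AdjoinRoot.mk _ g, phi_mk hn a g⟩

noncomputable def centIso (hn : 0 < n) (a : k) :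
    AdjoinRoot (X ^ n - C a) ≃ₐ[k]
      Subalgebra.centralizer k ({cm n a} : Set (Matrix (Fin n) (Fin n) k)) :=
  (AlgEquiv.ofInjective (phi hn a) (phi_inj hn a)).trans
    (Subalgebra.equivOfEq _ _ (by rw [phi_range hn a, centralizer_eq hn a]))


lemma adjoinRoot_iso (hn : 0 < n) (a b c : kˣ) (t p w : ℕ)
    (hb : (b : k) = (a : k) ^ t * (c : k) ^ n)
    (hpw : t * p = 1 + n * w) :
    Nonempty (AdjoinRoot (X ^ n - C (a : k)) ≃ₐ[k] AdjoinRoot (X ^ n - C (b : k))) := by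
  have hma : (X ^ n - C (a : k)).Monic := monic_X_pow_sub_C _ hn.ne'
  have hmb : (X ^ n - C (b : k)).Monic := monic_X_pow_sub_C _ hn.ne'
  set A := AdjoinRoot (X ^ n - C (a : k))
  have hxa : (AdjoinRoot.root (X ^ n - C (a : k))) ^ n = algebraMap k A (a : k) := by
    have h0 : aeval (AdjoinRoot.root (X ^ n - C (a : k))) (X ^ n - C (a : k)) = 0 := by
      rw [AdjoinRoot.aeval_eq, AdjoinRoot.mk_self]
    rw [map_sub, aeval_X_pow, aeval_C, sub_eq_zero] at h0
    exact h0
  set z : A := algebraMap k A (c : k) * (AdjoinRoot.root (X ^ n - C (a : k))) ^ t with hzdef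
  have hzn : z ^ n = algebraMap k A (b : k) := by
    rw [hzdef, mul_pow, ← pow_mul, mul_comm t n, pow_mul, hxa, ← map_pow, ← map_pow,
      ← _root_.map_mul, hb, mul_comm]
  have hzr : aeval z (X ^ n - C (b : k)) = 0 := by
    rw [map_sub, aeval_X_pow, aeval_C, hzn, sub_self]
  set ψ : AdjoinRoot (X ^ n - C (b : k)) →ₐ[k] A :=
    AdjoinRoot.liftAlgHom (X ^ n - C (b : k)) (Algebra.ofId k A) z (by exact hzr) with hψdef
  have hzp : z ^ p = algebraMap k A ((c : k) ^ p * (a : k) ^ w) * AdjoinRoot.root (X ^ n - C (a : k)) := by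
    rw [hzdef, mul_pow, ← pow_mul, hpw, pow_add, pow_one, pow_mul, hxa, ← map_pow, ← map_pow,
      _root_.map_mul]
    ring
  have hsurj : Function.Surjective ψ := by
    rw [← AlgHom.range_eq_top, eq_top_iff, ← AdjoinRoot.adjoinRoot_eq_top, Algebra.adjoin_le_iff,
      Set.singleton_subset_iff, SetLike.mem_coe, AlgHom.mem_range]
    refine ⟨AdjoinRoot.mk _ (C (((c : k) ^ p * (a : k) ^ w)⁻¹) * X ^ p), ?_⟩
    have hu : (c : k) ^ p * (a : k) ^ w ≠ 0 :=
      mul_ne_zero (pow_ne_zero _ (Units.ne_zero c)) (pow_ne_zero _ (Units.ne_zero a))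
    rw [hψdef]
    change aeval z (C (((c : k) ^ p * (a : k) ^ w)⁻¹) * X ^ p) = _
    rw [_root_.map_mul, aeval_C, aeval_X_pow, hzp, ← mul_assoc,
      ← _root_.map_mul, inv_mul_cancel₀ hu, _root_.map_one, one_mul]
  have hfa0 : (X ^ n - C (a : k)) ≠ 0 := hma.ne_zero
  have hfb0 : (X ^ n - C (b : k)) ≠ 0 := hmb.ne_zero
  haveI : Module.Finite k A := (AdjoinRoot.powerBasis hfa0).finite
  haveI : Module.Finite k (AdjoinRoot (X ^ n - C (b : k))) := (AdjoinRoot.powerBasis hfb0).finite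
  have hrk : Module.finrank k (AdjoinRoot (X ^ n - C (b : k))) = Module.finrank k A := by
    rw [(AdjoinRoot.powerBasis hfa0).finrank, (AdjoinRoot.powerBasis hfb0).finrank,
      AdjoinRoot.powerBasis_dim, AdjoinRoot.powerBasis_dim, natDegree_X_pow_sub_C,
      natDegree_X_pow_sub_C]
  have hinj : Function.Injective ψ := by
    have h := (LinearMap.injective_iff_surjective_of_finrank_eq_finrank
      (f := ψ.toLinearMap) hrk).mpr hsurj
    exact h
  exact ⟨(AlgEquiv.ofBijective ψ ⟨hinj, hsurj⟩).symm⟩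

end Stmt17Aux


/-- If `[a]` and `[b]` generate the same subgroup of `k^×/(k^×)^n`, then the
centralizer algebras of the companion-type matrices `B_a` and `B_b` are isomorphic
as `k`-algebras. -/
theorem stmt_17 {k : Type*} [Field k] (n : ℕ) (hn : 0 < n) (hchar : (n : k) ≠ 0)
    (ζ : k) (hζ : IsPrimitiveRoot ζ n)
    (a b : kˣ) (Ba Bb : Matrix (Fin n) (Fin n) k)
    (hBa : ∀ i j : Fin n, Ba i j =
      if (i : ℕ) = 0 ∧ (j : ℕ) = n - 1 then (a : k)
      else if (i : ℕ) = (j : ℕ) + 1 then 1 else 0)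
    (hBb : ∀ i j : Fin n, Bb i j =
      if (i : ℕ) = 0 ∧ (j : ℕ) = n - 1 then (b : k)
      else if (i : ℕ) = (j : ℕ) + 1 then 1 else 0)
    (hgen : Subgroup.zpowers
        ((QuotientGroup.mk a : kˣ ⧸ (powMonoidHom n : kˣ →* kˣ).range))
      = Subgroup.zpowers
        ((QuotientGroup.mk b : kˣ ⧸ (powMonoidHom n : kˣ →* kˣ).range))) :
    Nonempty (Subalgebra.centralizer k ({Ba} : Set (Matrix (Fin n) (Fin n) k))
      ≃ₐ[k] Subalgebra.centralizer k ({Bb} : Set (Matrix (Fin n) (Fin n) k))) := by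
  classical
  have hBa' : Ba = Stmt17Aux.cm n (a : k) := by
    ext i j; rw [hBa]; rfl
  have hBb' : Bb = Stmt17Aux.cm n (b : k) := by
    ext i j; rw [hBb]; rfl
  set N := (powMonoidHom n : kˣ →* kˣ).range with hN
  obtain ⟨t, cu, ht1, htcop, hbac⟩ :
      ∃ (t : ℕ) (cu : kˣ), 1 ≤ t ∧ Nat.Coprime t n ∧ b = a ^ t * cu ^ n := by
    set abar : kˣ ⧸ N := QuotientGroup.mk a with habar
    set bbar : kˣ ⧸ N := QuotientGroup.mk b with hbbar
    have habn : abar ^ n = 1 := by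
      rw [habar, ← QuotientGroup.mk_pow, QuotientGroup.eq_one_iff]
      exact ⟨a, rfl⟩
    have hfin : IsOfFinOrder abar := isOfFinOrder_iff_pow_eq_one.mpr ⟨n, hn, habn⟩
    have hrpos : 0 < orderOf abar := hfin.orderOf_pos
    have hrdvd : orderOf abar ∣ n := orderOf_dvd_of_pow_eq_one habn
    have hbmem : bbar ∈ Subgroup.zpowers abar := hgen ▸ Subgroup.mem_zpowers bbar
    obtain ⟨s, hs⟩ := Subgroup.mem_zpowers_iff.mp hbmem
    have hs' : abar ^ ((s % (orderOf abar : ℤ)).toNat) = bbar := by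
      rw [← zpow_natCast,
        Int.toNat_of_nonneg (Int.emod_nonneg s (by exact_mod_cast hrpos.ne')),
        zpow_mod_orderOf, hs]
    set s' : ℕ := (s % (orderOf abar : ℤ)).toNat with hs'def
    have hordb : orderOf bbar = orderOf abar := by
      rw [← Nat.card_zpowers, ← Nat.card_zpowers, hgen]
    have hcop : Nat.Coprime s' (orderOf abar) := by
      by_cases hs0 : s' = 0
      · have hb1 : bbar = 1 := by rw [← hs', hs0, pow_zero]
        have : orderOf abar = 1 := by rw [← hordb, hb1, orderOf_one]
        rw [this]
        exact Nat.coprime_one_right s'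
      · have h1 : orderOf (abar ^ s') = orderOf abar / Nat.gcd (orderOf abar) s' :=
          orderOf_pow' abar hs0
        rw [hs', hordb] at h1
        rcases Nat.div_eq_self.mp h1.symm with h | h
        · omega
        · exact Nat.coprime_comm.mp h
    haveI : NeZero n := ⟨hn.ne'⟩
    obtain ⟨u, hu⟩ := ZMod.unitsMap_surjective hrdvd (ZMod.unitOfCoprime s' hcop)
    set t0 := (u : ZMod n).val with ht0
    have ht0cop : Nat.Coprime t0 n := ZMod.val_coe_unit_coprime u
    have hcast : ((t0 : ℕ) : ZMod (orderOf abar)) = ((s' : ℕ) : ZMod (orderOf abar)) := by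
      have h3 := congrArg Units.val hu
      rw [ZMod.unitsMap, Units.coe_map] at h3
      have h4 : ((t0 : ℕ) : ZMod n) = (u : ZMod n) := ZMod.natCast_rightInverse (u : ZMod n)
      calc ((t0 : ℕ) : ZMod (orderOf abar))
          = (ZMod.castHom hrdvd (ZMod (orderOf abar))) ((t0 : ℕ) : ZMod n) :=
            (map_natCast _ _).symm
        _ = (ZMod.castHom hrdvd (ZMod (orderOf abar))) (u : ZMod n) := by rw [h4]
        _ = ((s' : ℕ) : ZMod (orderOf abar)) := h3.trans (ZMod.coe_unitOfCoprime s' hcop)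
    have hmod : t0 ≡ s' [MOD orderOf abar] :=
      (ZMod.natCast_eq_natCast_iff _ _ _).mp hcast
    refine ⟨t0 + n, ?_⟩
    have htcop : Nat.Coprime (t0 + n) n := Nat.coprime_add_self_left.mpr ht0cop
    have hnmod : n ≡ 0 [MOD orderOf abar] := Nat.modEq_zero_iff_dvd.mpr hrdvd
    have htmod : t0 + n ≡ s' [MOD orderOf abar] := by
      have h5 : t0 + n ≡ t0 + 0 [MOD orderOf abar] := Nat.ModEq.add_left t0 hnmod
      rw [Nat.add_zero] at h5
      exact h5.trans hmod
    have habt : abar ^ (t0 + n) = bbar := by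
      have hslt : s' < orderOf abar := by
        have h11 := Int.emod_lt_of_pos s (b := (orderOf abar : ℤ)) (by exact_mod_cast hrpos)
        have h12 := Int.emod_nonneg s
          (show (orderOf abar : ℤ) ≠ 0 by exact_mod_cast hrpos.ne')
        omega
      have h10 : (t0 + n) % orderOf abar = s' := by
        have h13 := htmod
        rwa [Nat.ModEq, Nat.mod_eq_of_lt hslt] at h13
      have h9 := Nat.div_add_mod (t0 + n) (orderOf abar)
      rw [h10] at h9
      calc abar ^ (t0 + n)
          = abar ^ (orderOf abar * ((t0 + n) / orderOf abar) + s') := by rw [h9]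
        _ = (abar ^ orderOf abar) ^ ((t0 + n) / orderOf abar) * abar ^ s' := by
            rw [pow_add, pow_mul]
        _ = bbar := by
            rw [pow_orderOf_eq_one, _root_.one_pow]
            exact (_root_.one_mul _).trans hs'
    have hmem : b * (a ^ (t0 + n))⁻¹ ∈ N := by
      rw [← QuotientGroup.eq_one_iff]
      have e2 : (QuotientGroup.mk (a ^ (t0 + n)) : kˣ ⧸ N) = bbar := by
        rw [QuotientGroup.mk_pow]
        exact habt
      calc (QuotientGroup.mk (b * (a ^ (t0 + n))⁻¹) : kˣ ⧸ N)
          = bbar * (QuotientGroup.mk (a ^ (t0 + n)) : kˣ ⧸ N)⁻¹ := rfl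
        _ = bbar * bbar⁻¹ := by rw [e2]
        _ = 1 := mul_inv_cancel bbar
    obtain ⟨cu, hcu⟩ := hmem
    refine ⟨cu, by omega, htcop, ?_⟩
    have hcu' : cu ^ n = b * (a ^ (t0 + n))⁻¹ := hcu
    rw [hcu', mul_comm, inv_mul_cancel_right]
  obtain ⟨p, w, hpw⟩ : ∃ p w : ℕ, t * p = 1 + n * w := by
    rcases Nat.lt_or_ge n 2 with h1 | h1
    · have hn1 : n = 1 := by omega
      subst hn1
      exact ⟨1, t - 1, by omega⟩
    · obtain ⟨p, hp⟩ := Nat.exists_mul_mod_eq_one_of_coprime htcop h1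
      refine ⟨p, t * p / n, ?_⟩
      have h6 := Nat.div_add_mod (t * p) n
      omega
  have hbk : (b : k) = (a : k) ^ t * (cu : k) ^ n := by
    rw [hbac]
    push_cast
    ring
  rw [hBa', hBb']
  obtain ⟨eab⟩ := Stmt17Aux.adjoinRoot_iso hn a b cu t p w hbk hpw
  exact ⟨((Stmt17Aux.centIso hn (a : k)).symm.trans eab).trans (Stmt17Aux.centIso hn (b : k))⟩
end
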